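/- Let $G$ be a compact subgroup of $O(N)$ acting on functions by $(g_* v)(x) = v(g^{-1}x)$, and let $I$ be a $G$-invariant $C^1$ functional on a Banach space $E$ of functions on $\mathbb{R}^N$ on which $G$ acts by isometries, with $G$-invariant subspace $E_G$. If $(u_n) \subset E_G$ satisfies $I'(u_n) \to 0$ in the dual of $E_G$, then $I'(u_n) \to 0$ in the dual of $E$. -/

import Mathlib

open Filter Topology MeasureTheory

set_option synthInstance.maxHeartbeats 1000000
noncomputable section

/-- Principle of symmetric criticality for Palais–Smale sequences: let `G` be a compact
topological group acting on a Banach space `E` by linear isometries (continuously in the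
group variable), `I : E → ℝ` a `G`-invariant `C¹` functional with derivative `I'`, and
`E_G` the subspace of `G`-invariant vectors. If `(uₙ) ⊂ E_G` and `I'(uₙ) → 0` in the dual
of `E_G` (i.e. the restriction of `I'(uₙ)` to `E_G` tends to `0` in norm), then
`I'(uₙ) → 0` in the dual of `E`. -/
theorem stmt13 {E : Type*} [NormedAddCommGroup E] [NormedSpace ℝ E] [CompleteSpace E]
    {G : Type*} [Group G] [TopologicalSpace G] [IsTopologicalGroup G] [CompactSpace G]
    [MeasurableSpace G] [BorelSpace G]
    (ρ : G →* (E ≃ₗᵢ[ℝ] E)) (hcont : ∀ v : E, Continuous fun g => ρ g v)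
    (I : E → ℝ) (I' : E → E →L[ℝ] ℝ) (hI : ∀ u, HasFDerivAt I (I' u) u)
    (hinv : ∀ g : G, ∀ u : E, I (ρ g u) = I u)
    (EG : Submodule ℝ E) (hEG : ∀ u : E, u ∈ EG ↔ ∀ g : G, ρ g u = u)
    (u : ℕ → E) (hu : ∀ n, u n ∈ EG)
    (h0 : Tendsto (fun n => ‖(I' (u n)).comp EG.subtypeL‖) atTop (𝓝 0)) :
    Tendsto (fun n => ‖I' (u n)‖) atTop (𝓝 0) := by
  -- the normalized Haar measure on the compact group `G`
  set μ : Measure G := Measure.haarMeasure (⊤ : TopologicalSpace.PositiveCompacts G) with hμ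
  have hprob : IsProbabilityMeasure μ := by
    constructor
    rw [hμ, ← TopologicalSpace.PositiveCompacts.coe_top (α := G)]
    exact Measure.haarMeasure_self
  -- integrability of orbit maps
  have hint : ∀ v : E, Integrable (fun g => ρ g v) μ := by
    intro v
    exact (hcont v).integrable_of_hasCompactSupport
      (isClosed_closure.isCompact)
  -- the averaging operator
  set P : E → E := fun v => ∫ g, ρ g v ∂μ with hP
  -- the average lies in `EG`
  have hPmem : ∀ v : E, P v ∈ EG := by
    intro v
    rw [hEG]
    intro g
    have h1 : ρ g (P v) = ∫ h, ρ g (ρ h v) ∂μ := by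
      rw [hP]
      exact (ContinuousLinearMap.integral_comp_comm
        ((ρ g).toContinuousLinearEquiv : E →L[ℝ] E) (hint v)).symm
    have h2 : (fun h => ρ g (ρ h v)) = fun h => ρ (g * h) v := by
      funext h
      rw [map_mul]
      rfl
    rw [h1, h2]
    exact MeasureTheory.integral_mul_left_eq_self (fun h => ρ h v) g
  -- the average does not increase the norm
  have hPnorm : ∀ v : E, ‖P v‖ ≤ ‖v‖ := by
    intro v
    calc ‖P v‖ ≤ ∫ g, ‖ρ g v‖ ∂μ := norm_integral_le_integral_norm _
    _ = ∫ (_ : G), ‖v‖ ∂μ := by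
        congr 1
        funext g
        exact (ρ g).norm_map v
    _ = ‖v‖ := by simp
  -- the derivative is invariant under precomposition with the action, at invariant points
  have hcomp : ∀ (g : G) (w : E),
      (I' (ρ g w)).comp ((ρ g).toContinuousLinearEquiv : E →L[ℝ] E) = I' w := by
    intro g w
    have h1 : HasFDerivAt (fun x => I ((ρ g).toContinuousLinearEquiv x))
        ((I' (ρ g w)).comp ((ρ g).toContinuousLinearEquiv : E →L[ℝ] E)) w := by
      have := (hI ((ρ g).toContinuousLinearEquiv w)).comp w
        ((ρ g).toContinuousLinearEquiv.hasFDerivAt)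
      exact this
    have h2 : (fun x => I ((ρ g).toContinuousLinearEquiv x)) = I := funext fun x => hinv g x
    rw [h2] at h1
    exact h1.unique (hI w)
  -- key identity: for `uₙ ∈ EG`, `I'(uₙ) v = I'(uₙ) (P v)`
  have hkey : ∀ n (v : E), I' (u n) v = I' (u n) (P v) := by
    intro n v
    have hfix : ∀ g : G, ρ g (u n) = u n := (hEG (u n)).mp (hu n)
    have hval : ∀ g : G, I' (u n) (ρ g v) = I' (u n) v := by
      intro g
      have := hcomp g (u n)
      rw [hfix g] at this
      calc I' (u n) (ρ g v)
          = ((I' (u n)).comp ((ρ g).toContinuousLinearEquiv : E →L[ℝ] E)) v := rfl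
        _ = I' (u n) v := by rw [this]
    have h3 : I' (u n) (P v) = ∫ g, I' (u n) (ρ g v) ∂μ := by
      rw [hP]
      exact (ContinuousLinearMap.integral_comp_comm (I' (u n)) (hint v)).symm
    rw [h3]
    have h4 : (fun g => I' (u n) (ρ g v)) = fun _ => I' (u n) v := funext hval
    rw [h4]
    simp
  -- norm bound
  have hbound : ∀ n, ‖I' (u n)‖ ≤ ‖(I' (u n)).comp EG.subtypeL‖ := by
    intro n
    refine ContinuousLinearMap.opNorm_le_bound _ (ContinuousLinearMap.opNorm_nonneg _) fun v => ?_
    calc ‖I' (u n) v‖ = ‖I' (u n) (P v)‖ := by rw [hkey n v]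
      _ = ‖((I' (u n)).comp EG.subtypeL) ⟨P v, hPmem v⟩‖ := rfl
      _ ≤ ‖(I' (u n)).comp EG.subtypeL‖ * ‖(⟨P v, hPmem v⟩ : EG)‖ :=
          ContinuousLinearMap.le_opNorm _ _
      _ = ‖(I' (u n)).comp EG.subtypeL‖ * ‖P v‖ := rfl
      _ ≤ ‖(I' (u n)).comp EG.subtypeL‖ * ‖v‖ := by
          exact mul_le_mul_of_nonneg_left (hPnorm v) (ContinuousLinearMap.opNorm_nonneg _)
  exact squeeze_zero (fun n => ContinuousLinearMap.opNorm_nonneg _) hbound h0
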